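/- Let k > d ≥ 2 and let x_1 < x_2 < ... < x_k be real numbers. Suppose Q is a real polynomial of degree d that is extremal for (d, {x_1,...,x_k}). Then Q(x_1) = (−1)^d and Q(x_k) = 1. -/

import Mathlib

open Polynomial Finset

lemma prod_neg_helper (s : Finset ℕ) (f : ℕ → ℝ) :
    ∏ i ∈ s, (-(f i)) = (-1 : ℝ) ^ s.card * ∏ i ∈ s, f i := by
  rw [Finset.prod_congr rfl (fun i _ => show -(f i) = -1 * f i by ring),
    Finset.prod_mul_distrib, Finset.prod_const]

lemma key_interp (n : ℕ) (hn : 0 < n) (w : ℕ → ℝ)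
    (hw : ∀ j1 j2, j1 < j2 → j2 ≤ n → w j2 < w j1)
    (Q : Polynomial ℝ) (hdeg : Q.natDegree ≤ n)
    (hval : ∀ j ≤ n, Q.eval (w j) = (-1 : ℝ) ^ j)
    (y : ℝ) (hy : w 0 < y) : 1 < Q.eval y := by
  classical
  have hinj : Set.InjOn w (Finset.range (n+1)) := by
    intro p hp q hq hpq
    simp only [Finset.coe_range, Set.mem_Iio] at hp hq
    by_contra hne
    rcases Nat.lt_or_ge p q with h | h
    · exact absurd hpq.symm (ne_of_lt (hw p q h (by omega)))
    · exact absurd hpq (ne_of_lt (hw q p (by omega) (by omega)))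
  have hdlt : Q.degree < (Finset.range (n+1)).card := by
    rw [Finset.card_range]
    calc Q.degree ≤ (Q.natDegree : WithBot ℕ) := Polynomial.degree_le_natDegree
    _ < ((n+1 : ℕ) : WithBot ℕ) := by exact_mod_cast Nat.lt_succ_of_le hdeg
  have hQi := Lagrange.eq_interpolate_of_eval_eq (r := fun j => (-1 : ℝ)^j) hinj hdlt
    (fun i hi => hval i (by simpa using Nat.lt_succ_iff.mp (Finset.mem_range.mp hi)))
  -- positivity of y - w j
  have hyw : ∀ j ≤ n, 0 < y - w j := by
    intro j hj
    rcases Nat.eq_zero_or_pos j with rfl | hj0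
    · linarith
    · have := hw 0 j hj0 hj; linarith
  set g : ℕ → ℕ → ℝ := fun i j => (w i - w j)⁻¹ * (y - w j) with hg
  have heval : Q.eval y = ∑ i ∈ Finset.range (n+1),
      (-1 : ℝ)^i * ∏ j ∈ (Finset.range (n+1)).erase i, g i j := by
    conv_lhs => rw [hQi]
    rw [Lagrange.interpolate_apply, eval_finset_sum]
    refine Finset.sum_congr rfl fun i _ => ?_
    rw [eval_mul, eval_C, Lagrange.basis, eval_prod]
    congr 1
    refine Finset.prod_congr rfl fun j _ => ?_
    simp [Lagrange.basisDivisor, hg]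
  rw [heval]
  have hterm0 : 1 < (-1 : ℝ)^0 * ∏ j ∈ (Finset.range (n+1)).erase 0, g 0 j := by
    rw [pow_zero, one_mul]
    have he : (Finset.range (n+1)).erase 0 = Finset.Ico 1 (n+1) := by
      ext j; simp only [Finset.mem_erase, Finset.mem_range, Finset.mem_Ico]; omega
    rw [he]
    have hlt : ∀ j ∈ Finset.Ico 1 (n+1), (1:ℝ) < g 0 j := by
      intro j hj
      rw [Finset.mem_Ico] at hj
      have h1 : 0 < w 0 - w j := by have := hw 0 j (by omega) (by omega); linarith
      have h2 : w 0 - w j < y - w j := by linarith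
      show (1:ℝ) < (w 0 - w j)⁻¹ * (y - w j)
      rw [inv_mul_eq_div]
      exact (one_lt_div h1).mpr h2
    calc (1:ℝ) = ∏ _j ∈ Finset.Ico 1 (n+1), (1:ℝ) := by rw [Finset.prod_const_one]
    _ < ∏ j ∈ Finset.Ico 1 (n+1), g 0 j :=
        Finset.prod_lt_prod_of_nonempty (by simp) hlt (Finset.nonempty_Ico.mpr (by omega))
  have hnonneg : ∀ i ∈ Finset.range (n+1),
      0 ≤ (-1 : ℝ)^i * ∏ j ∈ (Finset.range (n+1)).erase i, g i j := by
    intro i hi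
    have hin : i ≤ n := Nat.lt_succ_iff.mp (Finset.mem_range.mp hi)
    have he : (Finset.range (n+1)).erase i = Finset.range i ∪ Finset.Ico (i+1) (n+1) := by
      ext j; simp only [Finset.mem_erase, Finset.mem_range, Finset.mem_union, Finset.mem_Ico]
      omega
    have hdisj : Disjoint (Finset.range i) (Finset.Ico (i+1) (n+1)) := by
      rw [Finset.disjoint_left]
      intro j hj hj'
      simp only [Finset.mem_range] at hj
      simp only [Finset.mem_Ico] at hj'
      omega
    rw [he, Finset.prod_union hdisj]
    have hA : ∏ j ∈ Finset.range i, g i j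
        = (-1 : ℝ)^i * ∏ j ∈ Finset.range i, (-(g i j)) := by
      rw [prod_neg_helper, Finset.card_range, ← mul_assoc, ← mul_pow]
      norm_num
    have hApos : 0 < ∏ j ∈ Finset.range i, (-(g i j)) := by
      refine Finset.prod_pos fun j hj => ?_
      rw [Finset.mem_range] at hj
      have h1 : w i - w j < 0 := by have := hw j i hj hin; linarith
      have h2 : 0 < y - w j := hyw j (by omega)
      show (0:ℝ) < -((w i - w j)⁻¹ * (y - w j))
      have : (w i - w j)⁻¹ < 0 := inv_lt_zero.mpr h1
      nlinarith
    have hBpos : 0 < ∏ j ∈ Finset.Ico (i+1) (n+1), g i j := by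
      refine Finset.prod_pos fun j hj => ?_
      rw [Finset.mem_Ico] at hj
      have h1 : 0 < w i - w j := by have := hw i j (by omega) (by omega); linarith
      have h2 : 0 < y - w j := hyw j (by omega)
      positivity
    rw [hA]
    have hss : (-1 : ℝ)^i * ((-1 : ℝ)^i) = 1 := by rw [← mul_pow]; norm_num
    calc (0:ℝ) ≤ (∏ j ∈ Finset.range i, (-(g i j))) * ∏ j ∈ Finset.Ico (i+1) (n+1), g i j :=
          le_of_lt (mul_pos hApos hBpos)
    _ = (-1 : ℝ)^i * ((-1 : ℝ)^i * (∏ j ∈ Finset.range i, (-(g i j)))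
          * ∏ j ∈ Finset.Ico (i+1) (n+1), g i j) := by rw [← mul_assoc, ← mul_assoc, hss, one_mul]
  calc (1:ℝ) < (-1 : ℝ)^0 * ∏ j ∈ (Finset.range (n+1)).erase 0, g 0 j := hterm0
  _ ≤ ∑ i ∈ Finset.range (n+1), (-1 : ℝ)^i * ∏ j ∈ (Finset.range (n+1)).erase i, g i j :=
      Finset.single_le_sum hnonneg (by simp)

/-- `Q` is extremal for `(d, {x 0, ..., x (k-1)})`: it has degree `d`, is bounded in absolute
value by `1` on the points `x i`, and its leading coefficient is maximal among all degree `d`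
polynomials bounded in absolute value by `1` on the points `x i`. -/
def IsExtremal (d : ℕ) {k : ℕ} (x : Fin k → ℝ) (Q : Polynomial ℝ) : Prop :=
  Q.natDegree = d ∧ (∀ i : Fin k, |Q.eval (x i)| ≤ 1) ∧
    ∀ R : Polynomial ℝ, R.natDegree = d → (∀ i : Fin k, |R.eval (x i)| ≤ 1) →
      R.leadingCoeff ≤ Q.leadingCoeff

lemma lem_pert {d k : ℕ} (hk : 0 < k) (x : Fin k → ℝ) (Q : Polynomial ℝ)
    (hQ : IsExtremal d x Q) (hlc : 0 < Q.leadingCoeff)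
    (p : Polynomial ℝ) (hpm : p.Monic) (hpd : p.natDegree = d)
    (hsign : ∀ i, |Q.eval (x i)| = 1 → Q.eval (x i) * p.eval (x i) ≤ 0) : False := by
  classical
  haveI : Nonempty (Fin k) := ⟨⟨0, hk⟩⟩
  set δ : Fin k → ℝ := fun i => if |Q.eval (x i)| < 1
    then (1 - |Q.eval (x i)|)/(|p.eval (x i)| + 1) else 1/(|p.eval (x i)| + 1) with hδ
  have hδpos : ∀ i, 0 < δ i := by
    intro i
    have hpa := abs_nonneg (p.eval (x i))
    have hqa := abs_nonneg (Q.eval (x i))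
    show 0 < if |Q.eval (x i)| < 1
      then (1 - |Q.eval (x i)|)/(|p.eval (x i)| + 1) else 1/(|p.eval (x i)| + 1)
    split_ifs with h
    · apply div_pos <;> linarith
    · apply div_pos <;> linarith
  set ε : ℝ := Finset.univ.inf' Finset.univ_nonempty δ with hε
  have hεpos : 0 < ε := by
    rw [hε, Finset.lt_inf'_iff]
    exact fun i _ => hδpos i
  have hεle : ∀ i, ε ≤ δ i := fun i => Finset.inf'_le _ (Finset.mem_univ i)
  set R : Polynomial ℝ := Q + C ε * p with hR
  have hbound : ∀ i, |R.eval (x i)| ≤ 1 := by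
    intro i
    have hq := hQ.2.1 i
    have hpabs := abs_nonneg (p.eval (x i))
    rw [hR, eval_add, eval_mul, eval_C]
    set qi := Q.eval (x i)
    set pi := p.eval (x i)
    by_cases h : |qi| < 1
    · have h1 : ε ≤ (1 - |qi|)/(|pi| + 1) := by
        have := hεle i; have e : δ i = (1 - |qi|)/(|pi| + 1) := if_pos h; rw [e] at this; exact this
      have h2 : ε * (|pi| + 1) ≤ 1 - |qi| := by
        rw [← le_div_iff₀ (by linarith)]; exact h1
      have habs : |qi + ε * pi| ≤ |qi| + |ε * pi| := abs_add_le _ _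
      rw [abs_mul, abs_of_pos hεpos] at habs
      nlinarith
    · have h1' : |qi| = 1 := le_antisymm hq (not_lt.mp h)
      have hs := hsign i h1'
      have h1 : ε ≤ 1/(|pi| + 1) := by
        have := hεle i; have e : δ i = 1/(|pi| + 1) := if_neg h; rw [e] at this; exact this
      have h2 : ε * (|pi| + 1) ≤ 1 := by
        rw [← le_div_iff₀ (by linarith)]; exact h1
      have h3 : ε * pi ≤ ε * |pi| := by nlinarith [le_abs_self pi]
      have h4 : -(ε * |pi|) ≤ ε * pi := by nlinarith [neg_abs_le pi]
      rcases (abs_eq (by norm_num : (0:ℝ) ≤ 1)).mp h1' with hq1 | hq1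
      · have hpneg : pi ≤ 0 := by nlinarith
        rw [abs_le]
        constructor <;> nlinarith
      · have hppos : 0 ≤ pi := by nlinarith
        rw [abs_le]
        constructor <;> nlinarith
  have hRcoeff : R.coeff d = Q.leadingCoeff + ε := by
    have hQc : Q.coeff d = Q.leadingCoeff := by rw [Polynomial.leadingCoeff, hQ.1]
    have hpc : p.coeff d = 1 := by rw [← hpd]; exact hpm.coeff_natDegree
    rw [hR, coeff_add, coeff_C_mul, hQc, hpc]
    ring
  have hRdle : R.natDegree ≤ d := by
    refine le_trans (Polynomial.natDegree_add_le _ _) ?_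
    simp only [max_le_iff]
    exact ⟨le_of_eq hQ.1, le_trans (Polynomial.natDegree_C_mul_le _ _) (le_of_eq hpd)⟩
  have hRd : R.natDegree = d := by
    refine le_antisymm hRdle (Polynomial.le_natDegree_of_ne_zero ?_)
    rw [hRcoeff]; positivity
  have hRlc : R.leadingCoeff = Q.leadingCoeff + ε := by
    rw [Polynomial.leadingCoeff, hRd, hRcoeff]
  have := hQ.2.2 R hRd hbound
  rw [hRlc] at this
  linarith

lemma lc_pos {d k : ℕ} (hk : 0 < k) (x : Fin k → ℝ) (hx : StrictMono x)
    (Q : Polynomial ℝ) (hQ : IsExtremal d x Q) : 0 < Q.leadingCoeff := by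
  classical
  haveI : Nonempty (Fin k) := ⟨⟨0, hk⟩⟩
  set c : ℝ := x ⟨0, hk⟩ - 1 with hc
  have hxc : ∀ i, 1 ≤ x i - c := by
    intro i
    have : x ⟨0, hk⟩ ≤ x i := hx.monotone (by simp [Fin.le_def])
    rw [hc]; linarith
  set η : ℝ := Finset.univ.inf' Finset.univ_nonempty (fun i => 1/((x i - c)^d + 1)) with hη
  have hηpos : 0 < η := by
    rw [hη, Finset.lt_inf'_iff]
    intro i _
    have h1 : 0 < (x i - c)^d := pow_pos (by have := hxc i; linarith) d
    positivity
  set R : Polynomial ℝ := C η * (X - C c)^d with hR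
  have hRd : R.natDegree = d := by
    rw [hR, Polynomial.natDegree_C_mul (ne_of_gt hηpos), Polynomial.natDegree_pow,
      Polynomial.natDegree_X_sub_C, mul_one]
  have hRb : ∀ i, |R.eval (x i)| ≤ 1 := by
    intro i
    have h1 : 0 < (x i - c)^d := pow_pos (by have := hxc i; linarith) d
    have h2 : η ≤ 1/((x i - c)^d + 1) :=
      Finset.inf'_le _ (Finset.mem_univ i)
    have h3 : η * ((x i - c)^d + 1) ≤ 1 := by
      rw [← le_div_iff₀ (by linarith)]; exact h2
    rw [hR, eval_mul, eval_C, eval_pow, eval_sub, eval_X, eval_C,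
      abs_of_pos (by positivity)]
    nlinarith
  have h := hQ.2.2 R hRd hRb
  have hRlc : R.leadingCoeff = η := by
    rw [hR, Polynomial.leadingCoeff_mul, Polynomial.leadingCoeff_C,
      Polynomial.Monic.leadingCoeff ((monic_X_sub_C c).pow d), mul_one]
  rw [hRlc] at h
  linarith

lemma chain_exists {d k : ℕ} (hd : 2 ≤ d) (hdk : d < k) (x : Fin k → ℝ) (hx : StrictMono x)
    (Q : Polynomial ℝ) (hQ : IsExtremal d x Q) (hlc : 0 < Q.leadingCoeff) :
    ∀ m : ℕ, m ≤ d → ∃ a : ℕ → Fin k,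
      (∀ j ≤ m, Q.eval (x (a j)) = (-1 : ℝ) ^ j) ∧
      (∀ j < m, a (j+1) < a j) ∧
      (∀ i : Fin k, a 0 < i → Q.eval (x i) ≠ 1) ∧
      (∀ j < m, ∀ i : Fin k, a (j+1) < i → i < a j → Q.eval (x i) ≠ (-1 : ℝ)^(j+1)) := by
  classical
  have hk : 0 < k := by omega
  set c : ℝ := x ⟨0, hk⟩ - 1 with hc
  have hxc : ∀ i, 1 ≤ x i - c := by
    intro i
    have : x ⟨0, hk⟩ ≤ x i := hx.monotone (by simp [Fin.le_def])
    rw [hc]; linarith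
  have habs1 : ∀ i : Fin k, |Q.eval (x i)| = 1 →
      Q.eval (x i) = 1 ∨ Q.eval (x i) = -1 := fun i h =>
    (abs_eq (by norm_num : (0:ℝ) ≤ 1)).mp h
  intro m
  induction m with
  | zero =>
    intro _
    set S : Finset (Fin k) := Finset.univ.filter (fun i => Q.eval (x i) = 1) with hS
    by_cases hSne : S.Nonempty
    · refine ⟨fun _ => S.max' hSne, ?_, ?_, ?_, ?_⟩
      · intro j hj
        interval_cases j
        have h2 := (Finset.mem_filter.mp (S.max'_mem hSne)).2
        rw [pow_zero]
        exact h2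
      · intro j hj; omega
      · intro i hi hQi
        have : i ∈ S := Finset.mem_filter.mpr ⟨Finset.mem_univ _, hQi⟩
        exact absurd (S.le_max' i this) (not_le.mpr hi)
      · intro j hj; omega
    · exfalso
      refine lem_pert hk x Q hQ hlc ((X - C c)^d) ((monic_X_sub_C c).pow d)
        (by rw [Polynomial.natDegree_pow, Polynomial.natDegree_X_sub_C, mul_one]) ?_
      intro i h1
      have hne : Q.eval (x i) ≠ 1 := by
        intro hQi
        exact hSne ⟨i, Finset.mem_filter.mpr ⟨Finset.mem_univ _, hQi⟩⟩
      have hQm : Q.eval (x i) = -1 := (habs1 i h1).resolve_left hne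
      have hppos : 0 < ((X - C c)^d).eval (x i) := by
        rw [eval_pow, eval_sub, eval_X, eval_C]
        exact pow_pos (by have := hxc i; linarith) d
      rw [hQm]
      nlinarith
  | succ m ih =>
    intro hmd
    obtain ⟨a, hC1, hC2, hC3, hC4⟩ := ih (by omega)
    have hmono : ∀ j2, j2 ≤ m → ∀ j1, j1 ≤ j2 → a j2 ≤ a j1 := by
      intro j2
      induction j2 with
      | zero => intro _ j1 h1; rw [Nat.le_zero.mp h1]
      | succ n ihn =>
        intro hn j1 h1
        rcases Nat.lt_or_ge j1 (n+1) with h | h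
        · exact le_trans (le_of_lt (hC2 n (by omega))) (ihn (by omega) j1 (by omega))
        · have : j1 = n + 1 := by omega
          rw [this]
    set S : Finset (Fin k) :=
      Finset.univ.filter (fun i => i < a m ∧ Q.eval (x i) = (-1:ℝ)^(m+1)) with hS
    by_cases hSne : S.Nonempty
    · set b := S.max' hSne with hb
      have hbmem := Finset.mem_filter.mp (S.max'_mem hSne)
      refine ⟨fun j => if j ≤ m then a j else b, ?_, ?_, ?_, ?_⟩
      · intro j hj
        by_cases h : j ≤ m
        · simpa [if_pos h] using hC1 j h
        · have : j = m + 1 := by omega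
          simp only [if_neg h]
          rw [this]
          exact hbmem.2.2
      · intro j hj
        by_cases h : j < m
        · simpa [h, h.le, if_pos (by omega : j + 1 ≤ m), if_pos (by omega : j ≤ m)] using hC2 j h
        · have hjm : j = m := by omega
          simp only [hjm, if_neg (by omega : ¬ (m+1 ≤ m)), if_pos (le_refl m)]
          exact hbmem.2.1
      · intro i hi
        simp only [if_pos (Nat.zero_le m)] at hi
        exact hC3 i hi
      · intro j hj i hbi hia
        beta_reduce at hbi hia
        by_cases h : j < m
        · rw [if_pos (by omega : j + 1 ≤ m)] at hbi
          rw [if_pos (by omega : j ≤ m)] at hia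
          exact hC4 j h i hbi hia
        · have hjm : j = m := by omega
          rw [hjm, if_neg (by omega : ¬ (m+1 ≤ m))] at hbi
          rw [hjm, if_pos (le_refl m)] at hia
          intro hQi
          have : i ∈ S := Finset.mem_filter.mpr
            ⟨Finset.mem_univ _, hia, by rw [hjm] at hQi; exact hQi⟩
          exact absurd (S.le_max' i this) (not_le.mpr hbi)
    · exfalso
      have hne : ∀ i : Fin k, i < a m → Q.eval (x i) ≠ (-1:ℝ)^(m+1) := by
        intro i hi hQi
        exact hSne ⟨i, Finset.mem_filter.mpr ⟨Finset.mem_univ _, hi, hQi⟩⟩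
      set e := d - (m+1) with he
      set p : Polynomial ℝ :=
        (X - C c)^e * ∏ j ∈ Finset.range (m+1), (X - C (x (a j))) with hp
      have hpm : p.Monic := Monic.mul ((monic_X_sub_C c).pow e)
        (monic_prod_of_monic _ _ fun j _ => monic_X_sub_C _)
      have hpd : p.natDegree = d := by
        rw [hp, Monic.natDegree_mul ((monic_X_sub_C c).pow e)
          (monic_prod_of_monic _ _ fun j _ => monic_X_sub_C _),
          Polynomial.natDegree_pow, Polynomial.natDegree_X_sub_C, mul_one]
        rw [Polynomial.natDegree_prod _ _ (fun j _ => X_sub_C_ne_zero _)]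
        simp only [Polynomial.natDegree_X_sub_C]
        rw [Finset.sum_const, Finset.card_range, smul_eq_mul, mul_one]
        omega
      refine lem_pert hk x Q hQ hlc p hpm hpd ?_
      intro i h1
      have hpeval : p.eval (x i)
          = (x i - c)^e * ∏ j ∈ Finset.range (m+1), (x i - x (a j)) := by
        rw [hp, eval_mul, eval_pow, eval_sub, eval_X, eval_C, eval_prod]
        congr 1
        exact Finset.prod_congr rfl fun j _ => by rw [eval_sub, eval_X, eval_C]
      by_cases hchain : ∃ j ≤ m, i = a j
      · obtain ⟨j, hj, rfl⟩ := hchain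
        have : ∏ l ∈ Finset.range (m+1), (x (a j) - x (a l)) = 0 :=
          Finset.prod_eq_zero (i := j) (Finset.mem_range.mpr (by omega)) (sub_self _)
        rw [hpeval, this, mul_zero, mul_zero]
      · push_neg at hchain
        obtain ⟨s, hsle, hQs, hlt, hgt⟩ : ∃ s ≤ m + 1, Q.eval (x i) = -(-1:ℝ)^s ∧
            (∀ j < s, i < a j) ∧ (∀ j, s ≤ j → j ≤ m → a j < i) := by
          rcases lt_trichotomy i (a 0) with h0 | h0 | h0
          · set js := Nat.findGreatest (fun j => i < a j) m with hjs
            have hjsle : js ≤ m := Nat.findGreatest_le m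
            have hjsP : i < a js :=
              Nat.findGreatest_spec (P := fun j => i < a j) (Nat.zero_le m) h0
            by_cases hjm : js = m
            · refine ⟨m+1, le_refl _, ?_, ?_, ?_⟩
              · have h2 := hne i (by rw [← hjm]; exact hjsP)
                rcases habs1 i h1 with hq | hq <;>
                  rcases neg_one_pow_eq_or ℝ (m+1) with hp1 | hp1 <;>
                  rw [hq, hp1] at h2 ⊢ <;> first | (exact absurd rfl h2) | norm_num
              · intro j hj
                exact lt_of_lt_of_le hjsP (hmono js hjsle j (by omega))
              · intro j hj1 hj2
                exact (Nat.not_succ_le_self m (hj1.trans hj2)).elim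
            · have hnot : ¬ (i < a (js + 1)) :=
                Nat.findGreatest_is_greatest (P := fun j => i < a j) (n := m)
                  (by rw [← hjs]; omega) (by omega)
              have hlt2 : a (js+1) < i :=
                lt_of_le_of_ne (not_lt.mp hnot) (fun h => hchain (js+1) (by omega) h.symm)
              refine ⟨js+1, by omega, ?_, ?_, ?_⟩
              · have h2 := hC4 js (by omega) i hlt2 hjsP
                rcases habs1 i h1 with hq | hq <;>
                  rcases neg_one_pow_eq_or ℝ (js+1) with hp1 | hp1 <;>
                  rw [hq, hp1] at h2 ⊢ <;> first | (exact absurd rfl h2) | norm_num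
              · intro j hj
                exact lt_of_lt_of_le hjsP (hmono js hjsle j (by omega))
              · intro j hj1 hj2
                exact lt_of_le_of_lt (hmono j hj2 (js+1) hj1) hlt2
          · exact absurd h0 (hchain 0 (by omega))
          · refine ⟨0, by omega, ?_, ?_, ?_⟩
            · have h2 := hC3 i h0
              rcases habs1 i h1 with hq | hq
              · exact absurd hq h2
              · rw [hq]; norm_num
            · intro j hj; omega
            · intro j _ hj2
              exact lt_of_le_of_lt (hmono j hj2 0 (Nat.zero_le j)) h0
        have hApos : 0 < ∏ j ∈ Finset.range s, (x (a j) - x i) := by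
          refine Finset.prod_pos fun j hj => ?_
          rw [Finset.mem_range] at hj
          have := hx (hlt j hj)
          linarith
        have hBpos : 0 < ∏ j ∈ Finset.range (m+1-s), (x i - x (a (s + j))) := by
          refine Finset.prod_pos fun j hj => ?_
          rw [Finset.mem_range] at hj
          have := hx (hgt (s+j) (by omega) (by omega))
          linarith
        have hprod : ∏ j ∈ Finset.range (m+1), (x i - x (a j))
            = (-1:ℝ)^s * ((∏ j ∈ Finset.range s, (x (a j) - x i))
              * ∏ j ∈ Finset.range (m+1-s), (x i - x (a (s + j)))) := by
          have hsplit : ∏ j ∈ Finset.range (m+1), (x i - x (a j))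
              = (∏ j ∈ Finset.range s, (x i - x (a j)))
                * ∏ j ∈ Finset.range (m+1-s), (x i - x (a (s + j))) := by
            conv_lhs => rw [show m+1 = s + (m+1-s) by omega]
            exact Finset.prod_range_add _ s (m+1-s)
          have hneg : ∏ j ∈ Finset.range s, (x i - x (a j))
              = (-1:ℝ)^s * ∏ j ∈ Finset.range s, (x (a j) - x i) := by
            have h := prod_neg_helper (Finset.range s) (fun j => x (a j) - x i)
            rw [Finset.card_range] at h
            calc ∏ j ∈ Finset.range s, (x i - x (a j))
                = ∏ j ∈ Finset.range s, -((x (a j)) - x i) :=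
                  Finset.prod_congr rfl (fun j _ => by ring)
            _ = _ := h
          rw [hsplit, hneg]
          ring
        have hss : (-1 : ℝ)^s * ((-1 : ℝ)^s) = 1 := by rw [← mul_pow]; norm_num
        have hcpos : 0 < (x i - c)^e := pow_pos (by have := hxc i; linarith) e
        calc Q.eval (x i) * p.eval (x i)
            = -((-1:ℝ)^s * (-1:ℝ)^s) * ((x i - c)^e
              * ((∏ j ∈ Finset.range s, (x (a j) - x i))
                * ∏ j ∈ Finset.range (m+1-s), (x i - x (a (s + j))))) := by
              rw [hQs, hpeval, hprod]; ring
        _ = -((x i - c)^e * ((∏ j ∈ Finset.range s, (x (a j) - x i))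
              * ∏ j ∈ Finset.range (m+1-s), (x i - x (a (s + j))))) := by
              rw [hss]; ring
        _ ≤ 0 := by nlinarith [mul_pos hApos hBpos, mul_pos hcpos (mul_pos hApos hBpos)]

theorem stmt_10 (d k : ℕ) (hd : 2 ≤ d) (hdk : d < k) (x : Fin k → ℝ) (hx : StrictMono x)
    (Q : Polynomial ℝ) (hQ : IsExtremal d x Q) :
    Q.eval (x ⟨0, by omega⟩) = (-1 : ℝ) ^ d ∧ Q.eval (x ⟨k - 1, by omega⟩) = 1 := by
  classical
  have hk : 0 < k := by omega
  have hlc := lc_pos hk x hx Q hQ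
  obtain ⟨a, hC1, hC2, _, _⟩ := chain_exists hd hdk x hx Q hQ hlc d (le_refl d)
  have hstrict : ∀ j2, j2 ≤ d → ∀ j1, j1 < j2 → a j2 < a j1 := by
    intro j2
    induction j2 with
    | zero => intro _ j1 h1; omega
    | succ n ihn =>
      intro hn j1 h1
      rcases Nat.lt_or_ge j1 n with h | h
      · exact lt_trans (hC2 n (by omega)) (ihn (by omega) j1 h)
      · have : j1 = n := by omega
        rw [this]; exact hC2 n (by omega)
  have htop : Q.eval (x ⟨k - 1, by omega⟩) = 1 := by
    have h0le : x (a 0) ≤ x ⟨k - 1, by omega⟩ := by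
      apply hx.monotone
      rw [Fin.le_def]
      show (a 0).val ≤ k - 1
      have := (a 0).isLt
      omega
    rcases eq_or_lt_of_le h0le with heq | hlt
    · rw [← heq]
      have h := hC1 0 (Nat.zero_le d)
      rw [h, pow_zero]
    · exfalso
      have h1 := key_interp d (by omega) (fun j => x (a j))
        (fun j1 j2 hj hj2 => hx (hstrict j2 hj2 j1 hj)) Q (le_of_eq hQ.1)
        (fun j hj => hC1 j hj) (x ⟨k-1, by omega⟩) hlt
      have h2 := hQ.2.1 ⟨k-1, by omega⟩
      rw [abs_le] at h2
      linarith [h2.2]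
  have hbot : Q.eval (x ⟨0, by omega⟩) = (-1 : ℝ) ^ d := by
    have h0le : x ⟨0, by omega⟩ ≤ x (a d) := by
      apply hx.monotone
      rw [Fin.le_def]
      show 0 ≤ (a d).val
      omega
    rcases eq_or_lt_of_le h0le with heq | hlt
    · rw [heq]
      exact hC1 d (le_refl d)
    · exfalso
      set Q' : Polynomial ℝ := C ((-1:ℝ)^d) * (Q.comp (-X)) with hQ'
      have hQ'eval : ∀ t : ℝ, Q'.eval t = (-1:ℝ)^d * Q.eval (-t) := by
        intro t
        rw [hQ', eval_mul, eval_C, eval_comp, eval_neg, eval_X]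
      have hQ'deg : Q'.natDegree ≤ d := by
        refine le_trans (Polynomial.natDegree_C_mul_le _ _) ?_
        refine le_trans (Polynomial.natDegree_comp_le) ?_
        rw [Polynomial.natDegree_neg, Polynomial.natDegree_X, mul_one, hQ.1]
      have hval' : ∀ j ≤ d, Q'.eval (-(x (a (d - j)))) = (-1:ℝ)^j := by
        intro j hj
        rw [hQ'eval, neg_neg, hC1 (d - j) (by omega)]
        have hjd : (-1:ℝ)^(d-j) * (-1)^j = (-1)^d := by
          rw [← pow_add]; congr 1; omega
        calc (-1:ℝ)^d * (-1)^(d-j) = ((-1:ℝ)^(d-j) * (-1)^j) * (-1)^(d-j) := by rw [hjd]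
        _ = ((-1:ℝ)^(d-j) * (-1)^(d-j)) * (-1)^j := by ring
        _ = (-1:ℝ)^j := by rw [← mul_pow]; norm_num
      have hw' : ∀ j1 j2, j1 < j2 → j2 ≤ d → -(x (a (d - j2))) < -(x (a (d - j1))) := by
        intro j1 j2 h12 h2d
        have h := hx (hstrict (d - j1) (by omega) (d - j2) (by omega))
        linarith
      have h1 := key_interp d (by omega) (fun j => -(x (a (d - j)))) hw' Q' hQ'deg
        hval' (-(x ⟨0, by omega⟩)) (by simp only [Nat.sub_zero]; linarith)
      rw [hQ'eval, neg_neg] at h1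
      have h2 := hQ.2.1 ⟨0, by omega⟩
      have h3 : (-1:ℝ)^d * Q.eval (x ⟨0, by omega⟩) ≤ 1 := by
        have h4 : (-1:ℝ)^d * Q.eval (x ⟨0, by omega⟩)
            ≤ |(-1:ℝ)^d * Q.eval (x ⟨0, by omega⟩)| := le_abs_self _
        rw [abs_mul, abs_pow, abs_neg, abs_one, one_pow, one_mul] at h4
        linarith
      linarith
  exact ⟨hbot, htop⟩
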